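/- Let b > 0, σ > 0, κ > 0, t > 0, and let ν be a measure on (0,∞) with ∫_0^∞ (z∧1) ν(dz) < ∞. For s ∈ (0,t] and z > 1 set α(z,s) := 2bz/(σ²(e^{bs} − 1)) and β(z,s) := 2be^{bs}/(σ²(e^{bs} − 1)). Then ∫_0^t ∫_{(1,∞)} ( ∫_{[0,∞)} y^κ m_{α(z,s),β(z,s)}(dy) ) ν(dz) ds < ∞ if and only if ∫_{(1,∞)} z^κ ν(dz) < ∞. -/

import Mathlib

open MeasureTheory Filter Set
open scoped ENNReal

/-- The modified Bessel function of the first kind of order one,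
`I₁(r) = (r/2) Σ_{k=0}^∞ (r²/4)^k / (k!(k+1)!)`. -/
noncomputable def besselI1 (r : ℝ) : ℝ :=
  r / 2 * ∑' k : ℕ, (r ^ 2 / 4) ^ k / ((Nat.factorial k : ℝ) * (Nat.factorial (k + 1) : ℝ))

/-- The Bessel distribution `m_{α,β}` on `[0,∞)`:
`m_{α,β}(dx) = e^{−α} δ₀(dx) + β e^{−α−βx} √(α/(βx)) I₁(2√(αβx)) dx`. -/
noncomputable def besselMeasure (α β : ℝ) : Measure ℝ :=
  ENNReal.ofReal (Real.exp (-α)) • Measure.dirac (0 : ℝ) +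
    MeasureTheory.volume.withDensity fun x =>
      ENNReal.ofReal (Set.indicator (Set.Ioi (0 : ℝ))
        (fun x => β * Real.exp (-α - β * x) * Real.sqrt (α / (β * x)) *
          besselI1 (2 * Real.sqrt (α * β * x))) x)

namespace BexAux

noncomputable def ck (α β : ℝ) (k : ℕ) : ℝ :=
  Real.exp (-α) * α ^ (k+1) * β ^ (k+1) / ((Nat.factorial k : ℝ) * (Nat.factorial (k+1) : ℝ))

lemma ck_nonneg {α β : ℝ} (hα : 0 < α) (hβ : 0 < β) (k : ℕ) : 0 ≤ ck α β k := by
  unfold ck; positivity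

lemma summable_aux (u : ℝ) (hu : 0 ≤ u) :
    Summable (fun k : ℕ => u ^ k / ((Nat.factorial k : ℝ) * (Nat.factorial (k+1) : ℝ))) := by
  refine Summable.of_nonneg_of_le (fun k => by positivity) (fun k => ?_)
    (Real.summable_pow_div_factorial u)
  have hk : (0:ℝ) < (Nat.factorial k : ℝ) := by
    exact_mod_cast Nat.factorial_pos k
  have h1 : (1:ℝ) ≤ (Nat.factorial (k+1) : ℝ) :=
    Nat.one_le_cast.mpr (Nat.factorial_pos (k+1))
  have h2 : (Nat.factorial k : ℝ) ≤ (Nat.factorial k : ℝ) * (Nat.factorial (k+1) : ℝ) :=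
    le_mul_of_one_le_right hk.le h1
  exact div_le_div_of_nonneg_left (pow_nonneg hu k) hk h2

lemma density_eq (α β : ℝ) (hα : 0 < α) (hβ : 0 < β) :
    (fun x => ENNReal.ofReal (Set.indicator (Set.Ioi (0 : ℝ))
        (fun x => β * Real.exp (-α - β * x) * Real.sqrt (α / (β * x)) *
          besselI1 (2 * Real.sqrt (α * β * x))) x)) =
    fun x => ∑' k : ℕ, Set.indicator (Set.Ioi (0:ℝ))
        (fun x => ENNReal.ofReal (ck α β k * (x ^ k * Real.exp (-β * x)))) x := by
  funext x
  by_cases hx : x ∈ Set.Ioi (0:ℝ)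
  · rw [Set.indicator_of_mem hx]
    simp only [Set.indicator_of_mem hx]
    have hx0 : 0 < x := hx
    have hu : 0 ≤ α * β * x := by positivity
    have hb : besselI1 (2 * Real.sqrt (α * β * x)) =
        Real.sqrt (α * β * x) * ∑' k : ℕ, (α * β * x) ^ k /
          ((Nat.factorial k : ℝ) * (Nat.factorial (k+1) : ℝ)) := by
      unfold besselI1
      have h1 : 2 * Real.sqrt (α * β * x) / 2 = Real.sqrt (α * β * x) := by ring
      have h2 : (2 * Real.sqrt (α * β * x)) ^ 2 / 4 = α * β * x := by
        rw [mul_pow, Real.sq_sqrt hu]; ring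
      rw [h1, h2]
    have hsq : Real.sqrt (α / (β * x)) * Real.sqrt (α * β * x) = α := by
      rw [← Real.sqrt_mul (by positivity)]
      have : α / (β * x) * (α * β * x) = α ^ 2 := by
        field_simp
      rw [this, Real.sqrt_sq hα.le]
    have key : β * Real.exp (-α - β * x) * Real.sqrt (α / (β * x)) *
          besselI1 (2 * Real.sqrt (α * β * x)) =
        ∑' k : ℕ, ck α β k * (x ^ k * Real.exp (-β * x)) := by
      rw [hb]
      rw [show β * Real.exp (-α - β * x) * Real.sqrt (α / (β * x)) *
          (Real.sqrt (α * β * x) * ∑' k : ℕ, (α * β * x) ^ k /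
            ((Nat.factorial k : ℝ) * (Nat.factorial (k+1) : ℝ))) =
          (β * Real.exp (-α - β * x) * (Real.sqrt (α / (β * x)) * Real.sqrt (α * β * x))) *
          ∑' k : ℕ, (α * β * x) ^ k /
            ((Nat.factorial k : ℝ) * (Nat.factorial (k+1) : ℝ)) by ring]
      rw [hsq, ← tsum_mul_left]
      congr 1; funext k
      unfold ck
      rw [show -α - β * x = -α + -(β * x) by ring, Real.exp_add, mul_pow, mul_pow]
      field_simp
      ring
    rw [key]
    rw [ENNReal.ofReal_tsum_of_nonneg]
    · intro k
      have := ck_nonneg hα hβ k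
      positivity
    · refine ((summable_aux _ hu).mul_left
        (Real.exp (-α) * α * β * Real.exp (-β * x))).congr (fun k => ?_)
      unfold ck
      rw [mul_pow, mul_pow]
      field_simp
      ring
  · rw [Set.indicator_of_notMem hx]
    simp only [Set.indicator_of_notMem hx, ENNReal.ofReal_zero, tsum_zero]

lemma weight_measurable (β : ℝ) (k : ℕ) :
    Measurable (fun x : ℝ => ENNReal.ofReal (x ^ k * Real.exp (-β * x))) :=
  Measurable.ennreal_ofReal ((measurable_id.pow_const k).mul
    ((measurable_id.const_mul (-β)).exp))

/-- Master decomposition of integrals against the Bessel measure. -/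
lemma master {α β : ℝ} (hα : 0 < α) (hβ : 0 < β) {G : ℝ → ℝ≥0∞} (hG : Measurable G) :
    ∫⁻ y, G y ∂(besselMeasure α β) =
      ENNReal.ofReal (Real.exp (-α)) * G 0 +
      ∑' k : ℕ, ENNReal.ofReal (ck α β k) *
        ∫⁻ x in Set.Ioi (0:ℝ), G x * ENNReal.ofReal (x ^ k * Real.exp (-β * x)) := by
  have hterm : ∀ k : ℕ, Measurable (fun x : ℝ => Set.indicator (Set.Ioi (0:ℝ))
      (fun x => ENNReal.ofReal (ck α β k * (x ^ k * Real.exp (-β * x)))) x) := by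
    intro k
    apply Measurable.indicator _ measurableSet_Ioi
    apply Measurable.ennreal_ofReal
    exact measurable_const.mul ((measurable_id.pow_const k).mul
      ((measurable_id.const_mul (-β)).exp))
  have hF : Measurable (fun x : ℝ => ∑' k : ℕ, Set.indicator (Set.Ioi (0:ℝ))
      (fun x => ENNReal.ofReal (ck α β k * (x ^ k * Real.exp (-β * x)))) x) :=
    Measurable.ennreal_tsum hterm
  rw [besselMeasure, density_eq α β hα hβ, lintegral_add_measure, lintegral_smul_measure,
    lintegral_dirac, lintegral_withDensity_eq_lintegral_mul _ hF hG]
  congr 1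
  have swap : ∀ x : ℝ, ((fun x => ∑' k : ℕ, Set.indicator (Set.Ioi (0:ℝ))
      (fun x => ENNReal.ofReal (ck α β k * (x ^ k * Real.exp (-β * x)))) x) * G) x =
      ∑' k : ℕ, Set.indicator (Set.Ioi (0:ℝ))
        (fun x => ENNReal.ofReal (ck α β k * (x ^ k * Real.exp (-β * x))) * G x) x := by
    intro x
    simp only [Pi.mul_apply]
    rw [← ENNReal.tsum_mul_right]
    congr 1; funext k
    by_cases hx : x ∈ Set.Ioi (0:ℝ)
    · simp [Set.indicator_of_mem hx]
    · simp [Set.indicator_of_notMem hx]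
  simp only [swap]
  rw [lintegral_tsum]
  · congr 1; funext k
    rw [lintegral_indicator measurableSet_Ioi]
    have : ∀ x : ℝ, x ∈ Set.Ioi (0:ℝ) →
        ENNReal.ofReal (ck α β k * (x ^ k * Real.exp (-β * x))) * G x =
        ENNReal.ofReal (ck α β k) * (G x * ENNReal.ofReal (x ^ k * Real.exp (-β * x))) := by
      intro x hx
      rw [ENNReal.ofReal_mul (by unfold ck; positivity)]
      ring
    rw [setLIntegral_congr_fun measurableSet_Ioi this,
      lintegral_const_mul]
    exact hG.mul (weight_measurable β k)
  · intro k
    exact ((Measurable.indicator ((Measurable.ennreal_ofReal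
      (measurable_const.mul ((measurable_id.pow_const k).mul
      ((measurable_id.const_mul (-β)).exp)))).mul hG) measurableSet_Ioi)).aemeasurable

lemma integrableOn_base {q γ : ℝ} (hq : -1 < q) (hγ : 0 < γ) :
    IntegrableOn (fun x : ℝ => x ^ q * Real.exp (-γ * x)) (Set.Ioi 0) := by
  have := integrableOn_rpow_mul_exp_neg_mul_rpow hq one_pos hγ
  refine this.congr_fun (fun x hx => ?_) measurableSet_Ioi
  simp only [Real.rpow_one]

lemma lint_base {q γ : ℝ} (hq : 0 ≤ q) (hγ : 0 < γ) :
    ∫⁻ x in Set.Ioi (0:ℝ), ENNReal.ofReal (x ^ q * Real.exp (-γ * x)) =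
      ENNReal.ofReal (Real.Gamma (q+1) * (1/γ) ^ (q+1)) := by
  rw [← ofReal_integral_eq_lintegral_ofReal (integrableOn_base (by linarith) hγ)]
  · congr 1
    have := Real.integral_rpow_mul_exp_neg_mul_Ioi (a := q + 1) (r := γ) (by linarith) hγ
    simp only [add_sub_cancel_right] at this
    rw [show (fun x : ℝ => x ^ q * Real.exp (-γ * x)) = fun x : ℝ => x ^ q * Real.exp (-(γ * x))
      by funext x; rw [neg_mul]]
    rw [this]; ring
  · filter_upwards [self_mem_ae_restrict measurableSet_Ioi] with x hx
    have hx0 : (0:ℝ) < x := hx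
    positivity

lemma lint_natpow {γ : ℝ} (hγ : 0 < γ) (k : ℕ) :
    ∫⁻ x in Set.Ioi (0:ℝ), ENNReal.ofReal (x ^ k * Real.exp (-γ * x)) =
      ENNReal.ofReal ((Nat.factorial k : ℝ) * (1/γ) ^ (k+1)) := by
  have h := lint_base (q := (k:ℝ)) (Nat.cast_nonneg k) hγ
  have heq : ∀ x : ℝ, x ∈ Set.Ioi (0:ℝ) →
      ENNReal.ofReal (x ^ k * Real.exp (-γ * x)) =
      ENNReal.ofReal (x ^ (k:ℝ) * Real.exp (-γ * x)) := by
    intro x hx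
    rw [Real.rpow_natCast]
  rw [setLIntegral_congr_fun measurableSet_Ioi heq, h]
  congr 1
  rw [Real.Gamma_nat_eq_factorial]
  congr 1
  rw [show (k:ℝ) + 1 = ((k+1 : ℕ) : ℝ) by push_cast; ring, Real.rpow_natCast]
end BexAux

namespace BexAux

lemma tsum_ofReal_le {c : ℕ → ℝ} {C : ℝ} (h0 : ∀ k, 0 ≤ c k)
    (h : ∀ n, ∑ k ∈ Finset.range n, c k ≤ C) :
    ∑' k : ℕ, ENNReal.ofReal (c k) ≤ ENNReal.ofReal C := by
  rw [ENNReal.tsum_eq_iSup_sum]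
  refine iSup_le (fun s => ?_)
  obtain ⟨n, hn⟩ := s.exists_nat_subset_range
  calc ∑ k ∈ s, ENNReal.ofReal (c k) ≤ ∑ k ∈ Finset.range n, ENNReal.ofReal (c k) :=
        Finset.sum_le_sum_of_subset hn
    _ = ENNReal.ofReal (∑ k ∈ Finset.range n, c k) :=
        (ENNReal.ofReal_sum_of_nonneg (fun k _ => h0 k)).symm
    _ ≤ ENNReal.ofReal C := ENNReal.ofReal_le_ofReal (h n)

lemma real_exp_tsum_shift {x : ℝ} :
    ∑' k : ℕ, x^(k+1) / (Nat.factorial (k+1) : ℝ) = Real.exp x - 1 := by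
  have hexp : Real.exp x = ∑' n : ℕ, x^n / (Nat.factorial n : ℝ) := by
    rw [Real.exp_eq_exp_ℝ, NormedSpace.exp_eq_tsum_div]
  have hs : Summable (fun n : ℕ => x^n / (Nat.factorial n : ℝ)) :=
    Real.summable_pow_div_factorial x
  have := hs.tsum_eq_zero_add
  rw [hexp, this]
  simp

lemma series_exp_shift {x c : ℝ} (hx : 0 ≤ x) (hc : 0 ≤ c) :
    ∑' k : ℕ, ENNReal.ofReal (c * (x^(k+1) / (Nat.factorial (k+1) : ℝ))) =
      ENNReal.ofReal (c * (Real.exp x - 1)) := by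
  rw [← real_exp_tsum_shift (x := x), ← tsum_mul_left]
  rw [ENNReal.ofReal_tsum_of_nonneg (fun k => by positivity)]
  exact ((Real.summable_pow_div_factorial x).comp_injective
    (add_left_injective 1)).mul_left c

lemma mass {α β : ℝ} (hα : 0 < α) (hβ : 0 < β) :
    besselMeasure α β Set.univ = 1 := by
  rw [← lintegral_one, master hα hβ measurable_const]
  have hper : ∀ k : ℕ, ENNReal.ofReal (ck α β k) *
      ∫⁻ x in Set.Ioi (0:ℝ), (1:ℝ≥0∞) * ENNReal.ofReal (x ^ k * Real.exp (-β * x)) =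
      ENNReal.ofReal (Real.exp (-α) * (α^(k+1) / (Nat.factorial (k+1) : ℝ))) := by
    intro k
    simp only [one_mul]
    rw [lint_natpow hβ k, ← ENNReal.ofReal_mul (ck_nonneg hα hβ k)]
    congr 1
    unfold ck
    have h1 : (Nat.factorial k : ℝ) ≠ 0 := by exact_mod_cast (Nat.factorial_pos k).ne'
    have h2 : (Nat.factorial (k+1) : ℝ) ≠ 0 := by exact_mod_cast (Nat.factorial_pos (k+1)).ne'
    have hβ0 : β ≠ 0 := hβ.ne'
    field_simp
    rw [← mul_pow, mul_one_div_cancel hβ0, one_pow]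
  simp only [hper]
  rw [series_exp_shift hα.le (Real.exp_pos (-α)).le, mul_one,
    ← ENNReal.ofReal_add (Real.exp_pos (-α)).le
      (mul_nonneg (Real.exp_pos (-α)).le (sub_nonneg.mpr (Real.one_le_exp hα.le)))]
  rw [show Real.exp (-α) + Real.exp (-α) * (Real.exp α - 1) = Real.exp (-α) * Real.exp α by ring,
    ← Real.exp_add]
  simp

lemma isProb {α β : ℝ} (hα : 0 < α) (hβ : 0 < β) (s : Set ℝ) :
    besselMeasure α β s ≤ 1 := by
  rw [← mass hα hβ]
  exact measure_mono (Set.subset_univ s)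

lemma laplace_bound {α β a : ℝ} (hα : 0 < α) (hβ : 0 < β) :
    besselMeasure α β (Set.Iio a) ≤ ENNReal.ofReal (Real.exp (β*a/2 - α/3)) := by
  have hGmeas : Measurable (fun y : ℝ => ENNReal.ofReal (Real.exp (β*a/2 - β/2*y))) :=
    Measurable.ennreal_ofReal ((measurable_const.sub (measurable_id.const_mul (β/2))).exp)
  have hmono : besselMeasure α β (Set.Iio a) ≤
      ∫⁻ y, ENNReal.ofReal (Real.exp (β*a/2 - β/2*y)) ∂(besselMeasure α β) := by
    have hic := lintegral_indicator_const (μ := besselMeasure α β)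
      (measurableSet_Iio (a := a)) (1:ℝ≥0∞)
    rw [one_mul] at hic
    rw [← hic]
    refine lintegral_mono (fun y => ?_)
    by_cases hy : y ∈ Set.Iio a
    · rw [Set.indicator_of_mem hy]
      rw [show (1:ℝ≥0∞) = ENNReal.ofReal 1 by simp]
      apply ENNReal.ofReal_le_ofReal
      rw [show (1:ℝ) = Real.exp 0 by simp]
      apply Real.exp_le_exp.mpr
      have : y < a := hy
      nlinarith
    · rw [Set.indicator_of_notMem hy]
      exact zero_le
  refine hmono.trans ?_
  rw [master hα hβ hGmeas]
  have hper : ∀ k : ℕ, ENNReal.ofReal (ck α β k) *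
      ∫⁻ x in Set.Ioi (0:ℝ), ENNReal.ofReal (Real.exp (β*a/2 - β/2*x)) *
        ENNReal.ofReal (x ^ k * Real.exp (-β * x)) =
      ENNReal.ofReal (Real.exp (β*a/2)) *
        ENNReal.ofReal (Real.exp (-α) * ((2*α/3)^(k+1) / (Nat.factorial (k+1) : ℝ))) := by
    intro k
    have heq : ∀ x : ℝ, x ∈ Set.Ioi (0:ℝ) →
        ENNReal.ofReal (Real.exp (β*a/2 - β/2*x)) * ENNReal.ofReal (x ^ k * Real.exp (-β * x)) =
        ENNReal.ofReal (Real.exp (β*a/2)) * ENNReal.ofReal (x ^ k * Real.exp (-(3*β/2) * x)) := by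
      intro x hx
      rw [← ENNReal.ofReal_mul (Real.exp_pos _).le, ← ENNReal.ofReal_mul (Real.exp_pos _).le]
      congr 1
      rw [show β*a/2 - β/2*x = β*a/2 + (- β/2*x) by ring, Real.exp_add]
      rw [show -(3*β/2) * x = (- β/2*x) + (-β * x) by ring, Real.exp_add]
      ring
    rw [setLIntegral_congr_fun measurableSet_Ioi heq,
      lintegral_const_mul _ (weight_measurable _ k), lint_natpow (by positivity) k,
      ← mul_assoc, mul_comm (ENNReal.ofReal (ck α β k)), mul_assoc]
    congr 1
    rw [← ENNReal.ofReal_mul (ck_nonneg hα hβ k)]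
    congr 1
    unfold ck
    have h1 : (Nat.factorial k : ℝ) ≠ 0 := by exact_mod_cast (Nat.factorial_pos k).ne'
    have h2 : (Nat.factorial (k+1) : ℝ) ≠ 0 := by exact_mod_cast (Nat.factorial_pos (k+1)).ne'
    rw [show (1/(3*β/2)) = (2/(3*β)) by ring]
    rw [div_pow, div_pow]
    field_simp
    ring
  simp only [hper]
  rw [ENNReal.tsum_mul_left,
    series_exp_shift (by positivity : (0:ℝ) ≤ 2*α/3) (Real.exp_pos (-α)).le]
  rw [show β*a/2 - β/2*0 = β*a/2 by ring]
  rw [← ENNReal.ofReal_mul (Real.exp_pos _).le, ← ENNReal.ofReal_mul (Real.exp_pos _).le,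
    ← ENNReal.ofReal_add (by positivity)
      (mul_nonneg (Real.exp_pos _).le (mul_nonneg (Real.exp_pos _).le
        (sub_nonneg.mpr (Real.one_le_exp (by positivity)))))]
  apply le_of_eq
  congr 1
  rw [show Real.exp (-α) * Real.exp (β*a/2) + Real.exp (β*a/2) * (Real.exp (-α) * (Real.exp (2*α/3) - 1)) = Real.exp (β*a/2) * (Real.exp (-α) * Real.exp (2*α/3)) by ring,
    ← Real.exp_add, ← Real.exp_add]
  congr 1
  ring
end BexAux

namespace BexAux


lemma binom_expand {x y : ℝ} (j : ℕ) (hy : y = 1) :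
    (x + y)^j = ∑ m ∈ Finset.range (j+1), (Nat.choose j m : ℝ) * x^m := by
  subst hy
  rw [add_pow]
  exact Finset.sum_congr rfl (fun m _ => by rw [one_pow]; ring)

lemma poisson_sum {α : ℝ} (hα : 0 ≤ α) : ∀ i : ℕ, ∀ n : ℕ,
    ∑ k ∈ Finset.range n, (k:ℝ)^i * α^k / (Nat.factorial k : ℝ) ≤ (α + i)^i * Real.exp α := by
  intro i
  induction i using Nat.strong_induction_on with
  | _ i IH =>
    match i with
    | 0 =>
      intro n
      simp only [pow_zero, one_mul, Nat.cast_zero, add_zero]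
      simpa using Real.sum_le_exp_of_nonneg hα n
    | (j+1) =>
      intro n
      match n with
      | 0 => simp; positivity
      | (n'+1) =>
        rw [Finset.sum_range_succ']
        push_cast
        simp only [pow_zero, zero_pow (Nat.succ_ne_zero j), zero_mul, zero_div, add_zero,
          ne_eq, Nat.factorial_zero, Nat.cast_one]
        have hterm : ∀ k : ℕ, ((k:ℝ)+1)^(j+1) * α^(k+1) / (Nat.factorial (k+1) : ℝ) =
            α * (((k:ℝ)+1)^j * α^k / (Nat.factorial k : ℝ)) := by
          intro k
          have h1 : (Nat.factorial k : ℝ) ≠ 0 := by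
            exact_mod_cast (Nat.factorial_pos k).ne'
          have h2 : ((k:ℝ)+1) ≠ 0 := by positivity
          rw [Nat.factorial_succ, pow_succ α, pow_succ ((k:ℝ)+1)]
          push_cast
          field_simp
        have hXe : (0:ℝ) ≤ (α + ((j:ℝ)+1))^j * Real.exp α := by positivity
        calc ∑ k ∈ Finset.range n', ((k:ℝ)+1)^(j+1) * α^(k+1) / (Nat.factorial (k+1) : ℝ)
            = α * ∑ k ∈ Finset.range n', ((k:ℝ)+1)^j * α^k / (Nat.factorial k : ℝ) := by
              rw [Finset.mul_sum]; exact Finset.sum_congr rfl (fun k _ => hterm k)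
          _ ≤ α * ((α + ((j:ℝ)+1))^j * Real.exp α) := by
              apply mul_le_mul_of_nonneg_left _ hα
              calc ∑ k ∈ Finset.range n', ((k:ℝ)+1)^j * α^k / (Nat.factorial k : ℝ)
                  = ∑ k ∈ Finset.range n', ∑ m ∈ Finset.range (j+1),
                      (Nat.choose j m : ℝ) * ((k:ℝ)^m * α^k / (Nat.factorial k : ℝ)) := by
                    refine Finset.sum_congr rfl (fun k _ => ?_)
                    rw [binom_expand j rfl, Finset.sum_mul, Finset.sum_div]
                    exact Finset.sum_congr rfl (fun m _ => by ring)
                _ = ∑ m ∈ Finset.range (j+1), (Nat.choose j m : ℝ) *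
                      ∑ k ∈ Finset.range n', (k:ℝ)^m * α^k / (Nat.factorial k : ℝ) := by
                    rw [Finset.sum_comm]
                    exact Finset.sum_congr rfl (fun m _ => by rw [Finset.mul_sum])
                _ ≤ ∑ m ∈ Finset.range (j+1), (Nat.choose j m : ℝ) * ((α + j)^m * Real.exp α) := by
                    refine Finset.sum_le_sum (fun m hm => ?_)
                    have hm' : m ≤ j := Nat.lt_succ_iff.mp (Finset.mem_range.mp hm)
                    refine mul_le_mul_of_nonneg_left ?_ (Nat.cast_nonneg _)
                    calc ∑ k ∈ Finset.range n', (k:ℝ)^m * α^k / (Nat.factorial k : ℝ)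
                        ≤ (α + m)^m * Real.exp α := IH m (Nat.lt_succ_of_le hm') n'
                      _ ≤ (α + j)^m * Real.exp α := by
                          apply mul_le_mul_of_nonneg_right _ (Real.exp_pos α).le
                          apply pow_le_pow_left₀ (by positivity)
                          have : (m:ℝ) ≤ (j:ℝ) := Nat.cast_le.mpr hm'
                          linarith
                _ = (α + ((j:ℝ)+1))^j * Real.exp α := by
                    rw [show α + ((j:ℝ) + 1) = (α + (j:ℝ)) + 1 by ring,
                      binom_expand j rfl, Finset.sum_mul]
                    exact Finset.sum_congr rfl (fun m _ => by ring)
          _ ≤ (α + ((j:ℝ)+1))^(j+1) * Real.exp α := by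
              rw [pow_succ]
              have hX : α ≤ α + ((j:ℝ)+1) := by
                have : (0:ℝ) ≤ (j:ℝ) := Nat.cast_nonneg j
                linarith
              calc α * ((α + ((j:ℝ)+1))^j * Real.exp α)
                  = ((α + ((j:ℝ)+1))^j * Real.exp α) * α := by ring
                _ ≤ ((α + ((j:ℝ)+1))^j * Real.exp α) * (α + ((j:ℝ)+1)) :=
                    mul_le_mul_of_nonneg_left hX hXe
                _ = (α + ((j:ℝ)+1))^j * (α + ((j:ℝ)+1)) * Real.exp α := by ring

lemma fact_le {m : ℕ} (hm : 1 ≤ m) (k : ℕ) :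
    Nat.factorial (k + m) ≤ Nat.factorial (k+1) * (k+m)^(m-1) := by
  induction m with
  | zero => omega
  | succ m ih =>
    match m, ih with
    | 0, _ => simp
    | (m'+1), ih =>
      have ih' := ih (by omega)
      have h1 : Nat.factorial (k + (m'+2)) = (k + (m'+1) + 1) * Nat.factorial (k + (m'+1)) := by
        rw [show k + (m'+2) = (k + (m'+1)) + 1 by ring, Nat.factorial_succ]
      rw [h1]
      calc (k + (m'+1) + 1) * Nat.factorial (k + (m'+1))
          ≤ (k + (m'+1) + 1) * (Nat.factorial (k+1) * (k+(m'+1))^(m'+1-1)) :=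
            Nat.mul_le_mul_left _ ih'
        _ ≤ Nat.factorial (k+1) * (k+(m'+2))^(m'+2-1) := by
            simp only [Nat.add_sub_cancel]
            rw [show m' + 2 - 1 = m' + 1 by omega, pow_succ]
            have h2 : (k+(m'+1))^m' ≤ (k+(m'+2))^m' := Nat.pow_le_pow_left (by omega) m'
            calc (k + (m'+1) + 1) * (Nat.factorial (k+1) * (k+(m'+1))^m')
                ≤ (k + (m'+1) + 1) * (Nat.factorial (k+1) * (k+(m'+2))^m') :=
                  Nat.mul_le_mul_left _ (Nat.mul_le_mul_left _ h2)
              _ = Nat.factorial (k+1) * ((k+(m'+2))^m' * (k + (m'+2))) := by ring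

/-- partial sums for the m-th moment series -/
lemma moment_sum {α : ℝ} (hα : 0 ≤ α) {m : ℕ} (hm : 1 ≤ m) (n : ℕ) :
    ∑ k ∈ Finset.range n, α^(k+1) * (Nat.factorial (k+m) : ℝ) /
        ((Nat.factorial k : ℝ) * (Nat.factorial (k+1) : ℝ))
      ≤ α * (α + 2*m)^(m-1) * Real.exp α := by
  have step1 : ∀ k : ℕ, α^(k+1) * (Nat.factorial (k+m) : ℝ) /
        ((Nat.factorial k : ℝ) * (Nat.factorial (k+1) : ℝ))
      ≤ α * (((k:ℝ)+m)^(m-1) * α^k / (Nat.factorial k : ℝ)) := by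
    intro k
    have h1 : (Nat.factorial (k+m) : ℝ) ≤ (Nat.factorial (k+1) : ℝ) * ((k:ℝ)+m)^(m-1) := by
      have := fact_le hm k
      exact_mod_cast this
    have hk : (0:ℝ) < (Nat.factorial k : ℝ) := by exact_mod_cast Nat.factorial_pos k
    have hk1 : (0:ℝ) < (Nat.factorial (k+1) : ℝ) := by exact_mod_cast Nat.factorial_pos (k+1)
    rw [div_le_iff₀ (by positivity)]
    calc α^(k+1) * (Nat.factorial (k+m) : ℝ)
        ≤ α^(k+1) * ((Nat.factorial (k+1) : ℝ) * ((k:ℝ)+m)^(m-1)) :=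
          mul_le_mul_of_nonneg_left h1 (by positivity)
      _ = α * (((k:ℝ)+m)^(m-1) * α^k / (Nat.factorial k : ℝ)) *
            ((Nat.factorial k : ℝ) * (Nat.factorial (k+1) : ℝ)) := by
          rw [pow_succ]; field_simp
  calc ∑ k ∈ Finset.range n, α^(k+1) * (Nat.factorial (k+m) : ℝ) /
        ((Nat.factorial k : ℝ) * (Nat.factorial (k+1) : ℝ))
      ≤ ∑ k ∈ Finset.range n, α * (((k:ℝ)+m)^(m-1) * α^k / (Nat.factorial k : ℝ)) :=
        Finset.sum_le_sum (fun k _ => step1 k)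
    _ = α * ∑ k ∈ Finset.range n, ((k:ℝ)+m)^(m-1) * α^k / (Nat.factorial k : ℝ) := by
        rw [Finset.mul_sum]
    _ ≤ α * ((α + 2*m)^(m-1) * Real.exp α) := by
        apply mul_le_mul_of_nonneg_left _ hα
        calc ∑ k ∈ Finset.range n, ((k:ℝ)+m)^(m-1) * α^k / (Nat.factorial k : ℝ)
            = ∑ k ∈ Finset.range n, ∑ i ∈ Finset.range ((m-1)+1),
                ((Nat.choose (m-1) i : ℝ) * (m:ℝ)^((m-1)-i)) *
                  ((k:ℝ)^i * α^k / (Nat.factorial k : ℝ)) := by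
              refine Finset.sum_congr rfl (fun k _ => ?_)
              rw [add_pow, Finset.sum_mul, Finset.sum_div]
              exact Finset.sum_congr rfl (fun i _ => by ring)
          _ = ∑ i ∈ Finset.range ((m-1)+1), ((Nat.choose (m-1) i : ℝ) * (m:ℝ)^((m-1)-i)) *
                ∑ k ∈ Finset.range n, (k:ℝ)^i * α^k / (Nat.factorial k : ℝ) := by
              rw [Finset.sum_comm]
              exact Finset.sum_congr rfl (fun i _ => by rw [Finset.mul_sum])
          _ ≤ ∑ i ∈ Finset.range ((m-1)+1), ((Nat.choose (m-1) i : ℝ) * (m:ℝ)^((m-1)-i)) *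
                ((α + m)^i * Real.exp α) := by
              refine Finset.sum_le_sum (fun i hi => ?_)
              have hi' : i ≤ m-1 := Nat.lt_succ_iff.mp (Finset.mem_range.mp hi)
              refine mul_le_mul_of_nonneg_left ?_ (by positivity)
              calc ∑ k ∈ Finset.range n, (k:ℝ)^i * α^k / (Nat.factorial k : ℝ)
                  ≤ (α + i)^i * Real.exp α := poisson_sum hα i n
                _ ≤ (α + m)^i * Real.exp α := by
                    apply mul_le_mul_of_nonneg_right _ (Real.exp_pos α).le
                    apply pow_le_pow_left₀ (by positivity)
                    have : (i:ℝ) ≤ (m:ℝ) := Nat.cast_le.mpr (by omega)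
                    linarith
          _ = (α + 2*m)^(m-1) * Real.exp α := by
              rw [show α + 2*(m:ℝ) = (α + m) + m by ring, add_pow, Finset.sum_mul]
              exact Finset.sum_congr rfl (fun i _ => by ring)
    _ = α * (α + 2*m)^(m-1) * Real.exp α := by ring

end BexAux

namespace BexAux

lemma moment_nat_le {α β : ℝ} (hα : 0 < α) (hβ : 0 < β) {m : ℕ} (hm : 1 ≤ m) :
    ∫⁻ y, ENNReal.ofReal (y ^ (m:ℝ)) ∂(besselMeasure α β) ≤
      ENNReal.ofReal ((1/β)^m * (α * (α + 2*m)^(m-1))) := by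
  have hG : Measurable (fun y : ℝ => ENNReal.ofReal (y ^ (m:ℝ))) :=
    Measurable.ennreal_ofReal (Real.continuous_rpow_const (Nat.cast_nonneg m)).measurable
  rw [master hα hβ hG]
  have hm0 : ((m:ℝ)) ≠ 0 := by positivity
  rw [Real.zero_rpow hm0, ENNReal.ofReal_zero, mul_zero, zero_add]
  have hper : ∀ k : ℕ, ENNReal.ofReal (ck α β k) *
      ∫⁻ x in Set.Ioi (0:ℝ), ENNReal.ofReal (x ^ (m:ℝ)) *
        ENNReal.ofReal (x ^ k * Real.exp (-β * x)) =
      ENNReal.ofReal (ck α β k * ((Nat.factorial (k+m) : ℝ) * (1/β)^(k+m+1))) := by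
    intro k
    have heq : ∀ x : ℝ, x ∈ Set.Ioi (0:ℝ) →
        ENNReal.ofReal (x ^ (m:ℝ)) * ENNReal.ofReal (x ^ k * Real.exp (-β * x)) =
        ENNReal.ofReal (x ^ (k+m) * Real.exp (-β * x)) := by
      intro x hx
      have hx0 : (0:ℝ) < x := hx
      rw [← ENNReal.ofReal_mul (Real.rpow_nonneg hx0.le _), Real.rpow_natCast, pow_add]
      ring_nf
    rw [setLIntegral_congr_fun measurableSet_Ioi heq,
      lint_natpow hβ (k+m), ← ENNReal.ofReal_mul (ck_nonneg hα hβ k)]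
  simp only [hper]
  apply tsum_ofReal_le
  · intro k
    have h1 := ck_nonneg hα hβ k
    positivity
  · intro n
    have hterm : ∀ k : ℕ, ck α β k * ((Nat.factorial (k+m) : ℝ) * (1/β)^(k+m+1)) =
        ((1/β)^m * Real.exp (-α)) * (α^(k+1) * (Nat.factorial (k+m) : ℝ) /
          ((Nat.factorial k : ℝ) * (Nat.factorial (k+1) : ℝ))) := by
      intro k
      unfold ck
      have h1 : (Nat.factorial k : ℝ) ≠ 0 := by exact_mod_cast (Nat.factorial_pos k).ne'
      have h2 : (Nat.factorial (k+1) : ℝ) ≠ 0 := by exact_mod_cast (Nat.factorial_pos (k+1)).ne'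
      rw [pow_add, pow_add, div_pow, div_pow]
      field_simp
      ring
    calc ∑ k ∈ Finset.range n, ck α β k * ((Nat.factorial (k+m) : ℝ) * (1/β)^(k+m+1))
        = ((1/β)^m * Real.exp (-α)) * ∑ k ∈ Finset.range n,
            α^(k+1) * (Nat.factorial (k+m) : ℝ) /
              ((Nat.factorial k : ℝ) * (Nat.factorial (k+1) : ℝ)) := by
          rw [Finset.mul_sum]
          exact Finset.sum_congr rfl (fun k _ => hterm k)
      _ ≤ ((1/β)^m * Real.exp (-α)) * (α * (α + 2*m)^(m-1) * Real.exp α) := by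
          apply mul_le_mul_of_nonneg_left (moment_sum hα.le hm n) (by positivity)
      _ = (1/β)^m * (α * (α + 2*m)^(m-1)) * (Real.exp (-α) * Real.exp α) := by ring
      _ = (1/β)^m * (α * (α + 2*m)^(m-1)) := by
          rw [← Real.exp_add]; simp

lemma tail_lower {α β a : ℝ} (hα : 0 < α) (hβ : 0 < β) (ha : 0 < a) :
    ENNReal.ofReal (α * β * Real.exp (-α - β*(a+1))) ≤ besselMeasure α β (Set.Ici a) := by
  have hG : Measurable (fun y : ℝ => Set.indicator (Set.Ici a) (fun _ => (1:ℝ≥0∞)) y) :=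
    measurable_const.indicator measurableSet_Ici
  have hic := lintegral_indicator_const (μ := besselMeasure α β)
    (measurableSet_Ici (a := a)) (1:ℝ≥0∞)
  rw [one_mul] at hic
  rw [← hic, master hα hβ hG]
  have h0 : Set.indicator (Set.Ici a) (fun _ => (1:ℝ≥0∞)) 0 = 0 :=
    Set.indicator_of_notMem (by simpa using ha) _
  rw [h0, mul_zero, zero_add]
  refine le_trans ?_ (ENNReal.le_tsum 0)
  have hc0 : ck α β 0 = α * β * Real.exp (-α) := by
    unfold ck; simp [Nat.factorial]; ring
  have hsub : Set.Ioc a (a+1) ⊆ Set.Ioi (0:ℝ) := fun x hx => lt_trans ha hx.1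
  have hlow : ENNReal.ofReal (Real.exp (-β*(a+1))) ≤
      ∫⁻ x in Set.Ioi (0:ℝ), Set.indicator (Set.Ici a) (fun _ => (1:ℝ≥0∞)) x *
        ENNReal.ofReal (x ^ 0 * Real.exp (-β * x)) := by
    have step : ∫⁻ x in Set.Ioc a (a+1), ENNReal.ofReal (Real.exp (-β*(a+1))) ≤
        ∫⁻ x in Set.Ioc a (a+1), Set.indicator (Set.Ici a) (fun _ => (1:ℝ≥0∞)) x *
          ENNReal.ofReal (x ^ 0 * Real.exp (-β * x)) := by
      apply lintegral_mono_ae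
      rw [ae_restrict_iff' measurableSet_Ioc]
      refine Filter.Eventually.of_forall (fun x hx => ?_)
      rw [Set.indicator_of_mem (Set.mem_Ici.mpr (le_of_lt hx.1)), one_mul, pow_zero, one_mul]
      exact ENNReal.ofReal_le_ofReal (Real.exp_le_exp.mpr (by nlinarith [hx.2]))
    refine le_trans ?_ (step.trans (lintegral_mono' (Measure.restrict_mono hsub le_rfl) le_rfl))
    rw [setLIntegral_const, Real.volume_Ioc]
    rw [show a + 1 - a = 1 by ring]
    simp
  calc ENNReal.ofReal (α * β * Real.exp (-α - β*(a+1)))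
      = ENNReal.ofReal (ck α β 0) * ENNReal.ofReal (Real.exp (-β*(a+1))) := by
        rw [hc0, ← ENNReal.ofReal_mul (by positivity)]
        congr 1
        rw [show -α - β*(a+1) = -α + -β*(a+1) by ring, Real.exp_add]
        ring
    _ ≤ ENNReal.ofReal (ck α β 0) * ∫⁻ x in Set.Ioi (0:ℝ),
          Set.indicator (Set.Ici a) (fun _ => (1:ℝ≥0∞)) x *
            ENNReal.ofReal (x ^ 0 * Real.exp (-β * x)) :=
        mul_le_mul_right hlow _

lemma iio_zero {α β : ℝ} : besselMeasure α β (Set.Iio 0) = 0 := by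
  rw [besselMeasure]
  rw [Measure.add_apply, Measure.smul_apply, smul_eq_mul]
  rw [Measure.dirac_apply' _ measurableSet_Iio]
  rw [Set.indicator_of_notMem (by simp : (0:ℝ) ∉ Set.Iio (0:ℝ))]
  rw [mul_zero, zero_add]
  rw [withDensity_apply _ measurableSet_Iio]
  have : ∀ x : ℝ, x ∈ Set.Iio (0:ℝ) →
      ENNReal.ofReal (Set.indicator (Set.Ioi (0 : ℝ))
        (fun x => β * Real.exp (-α - β * x) * Real.sqrt (α / (β * x)) *
          besselI1 (2 * Real.sqrt (α * β * x))) x) = 0 := by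
    intro x hx
    rw [Set.indicator_of_notMem (by simp at hx ⊢; linarith : x ∉ Set.Ioi (0:ℝ))]
    simp
  rw [setLIntegral_congr_fun measurableSet_Iio this]
  simp

lemma ae_nonneg {α β : ℝ} {p : ℝ → Prop} (h : ∀ y : ℝ, 0 ≤ y → p y) :
    ∀ᵐ y ∂(besselMeasure α β), p y := by
  rw [ae_iff]
  refine measure_mono_null (fun y hy => ?_) (iio_zero (α := α) (β := β))
  simp only [Set.mem_setOf_eq] at hy
  by_contra hmem
  exact hy (h y (by simpa using hmem))

lemma moment_upper {α β κ : ℝ} (hα : 0 < α) (hβ : 0 < β) (hκ : 0 < κ) {m : ℕ}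
    (hm : 1 ≤ m) (hκm : κ ≤ m) {w : ℝ} (hw : 0 < w) :
    ∫⁻ y, ENNReal.ofReal (y ^ κ) ∂(besselMeasure α β) ≤
      ENNReal.ofReal (w ^ κ) + ENNReal.ofReal (w ^ (κ - m)) *
        ENNReal.ofReal ((1/β)^m * (α * (α + 2*m)^(m-1))) := by
  have hae : ∀ᵐ y ∂(besselMeasure α β), ENNReal.ofReal (y ^ κ) ≤
      ENNReal.ofReal (w ^ κ) + ENNReal.ofReal (w ^ (κ - m)) * ENNReal.ofReal (y ^ (m:ℝ)) := by
    apply ae_nonneg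
    intro y hy
    rcases le_or_gt y w with hyw | hyw
    · refine le_trans ?_ le_self_add
      exact ENNReal.ofReal_le_ofReal (Real.rpow_le_rpow hy hyw hκ.le)
    · refine le_trans ?_ le_add_self
      rw [← ENNReal.ofReal_mul (Real.rpow_nonneg hw.le _)]
      apply ENNReal.ofReal_le_ofReal
      have hy0 : 0 < y := lt_trans hw hyw
      calc y ^ κ = y ^ (κ - m) * y ^ (m:ℝ) := by
            rw [← Real.rpow_add hy0]; ring_nf
        _ ≤ w ^ (κ - m) * y ^ (m:ℝ) := by
            apply mul_le_mul_of_nonneg_right _ (Real.rpow_nonneg hy0.le _)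
            exact Real.rpow_le_rpow_of_nonpos hw hyw.le (by linarith)
  calc ∫⁻ y, ENNReal.ofReal (y ^ κ) ∂(besselMeasure α β)
      ≤ ∫⁻ y, (ENNReal.ofReal (w ^ κ) + ENNReal.ofReal (w ^ (κ - m)) *
          ENNReal.ofReal (y ^ (m:ℝ))) ∂(besselMeasure α β) := lintegral_mono_ae hae
    _ = ENNReal.ofReal (w ^ κ) * (besselMeasure α β) Set.univ +
          ENNReal.ofReal (w ^ (κ - m)) *
            ∫⁻ y, ENNReal.ofReal (y ^ (m:ℝ)) ∂(besselMeasure α β) := by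
        rw [lintegral_add_left measurable_const, lintegral_const,
          lintegral_const_mul _ (Measurable.ennreal_ofReal
            (Real.continuous_rpow_const (Nat.cast_nonneg m)).measurable)]
    _ ≤ ENNReal.ofReal (w ^ κ) + ENNReal.ofReal (w ^ (κ - m)) *
          ENNReal.ofReal ((1/β)^m * (α * (α + 2*m)^(m-1))) := by
        rw [mass hα hβ, mul_one]
        exact add_le_add_right (mul_le_mul_right (moment_nat_le hα hβ hm) _) _

lemma moment_lower {α β κ a : ℝ} (hα : 0 < α) (hβ : 0 < β) (hκ : 0 < κ) (ha : 0 < a) :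
    ENNReal.ofReal (a ^ κ) * besselMeasure α β (Set.Ici a) ≤
      ∫⁻ y, ENNReal.ofReal (y ^ κ) ∂(besselMeasure α β) := by
  have hic := lintegral_indicator_const (μ := besselMeasure α β)
    (measurableSet_Ici (a := a)) (ENNReal.ofReal (a ^ κ))
  rw [← hic]
  refine lintegral_mono (fun y => ?_)
  by_cases hy : y ∈ Set.Ici a
  · rw [Set.indicator_of_mem hy]
    exact ENNReal.ofReal_le_ofReal (Real.rpow_le_rpow ha.le hy hκ.le)
  · rw [Set.indicator_of_notMem hy]
    exact zero_le
end BexAux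

namespace BexAux

lemma two_sided {κ : ℝ} (hκ : 0 < κ) {β₀ μ₀ : ℝ} (hβ₀ : 0 < β₀) (hμ₀ : 0 < μ₀)
    {m : ℕ} (hm : 1 ≤ m) (hκm : κ ≤ m) :
    ∃ cl cu : ℝ, 0 < cl ∧ 0 < cu ∧ ∀ α β μ : ℝ, 0 < β → 0 < μ → α = β*μ →
      β₀ ≤ β → μ₀ ≤ μ →
      (ENNReal.ofReal (cl * μ ^ κ) ≤ ∫⁻ y, ENNReal.ofReal (y ^ κ) ∂(besselMeasure α β) ∧
       ∫⁻ y, ENNReal.ofReal (y ^ κ) ∂(besselMeasure α β) ≤ ENNReal.ofReal (cu * μ ^ κ)) := by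
  obtain ⟨n, rfl⟩ : ∃ n, m = n + 1 := ⟨m - 1, (Nat.succ_pred_eq_of_pos hm).symm⟩
  set Cn : ℝ := (1 + 2*(n+1)/(β₀*μ₀))^n with hCn
  have hCnpos : 0 < Cn := by positivity
  set c₂ : ℝ := β₀^2*μ₀*Real.exp (-(18+12/μ₀)) with hc₂
  have hc₂pos : 0 < c₂ := by positivity
  set c₁ : ℝ := min (1/2) c₂ with hc₁
  have hc₁pos : 0 < c₁ := lt_min (by norm_num) hc₂pos
  refine ⟨c₁ * (1/2) ^ κ, 1 + Cn, by positivity, by positivity, ?_⟩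
  intro α β μ hβ hμ hαβμ hββ₀ hμμ₀
  have hα : 0 < α := by rw [hαβμ]; positivity
  constructor
  · -- lower bound
    have ha : 0 < μ/2 := by linarith
    have hIci : ENNReal.ofReal c₁ ≤ besselMeasure α β (Set.Ici (μ/2)) := by
      rcases le_or_gt 12 α with h12 | h12
      · -- Laplace/Chernoff regime
        have hlap := laplace_bound (a := μ/2) hα hβ
        have hexp : β*(μ/2)/2 - α/3 = -(α/12) := by
          rw [hαβμ]; ring
        rw [hexp] at hlap
        have hlap2 : besselMeasure α β (Set.Iio (μ/2)) ≤ ENNReal.ofReal (1/2) := by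
          refine hlap.trans (ENNReal.ofReal_le_ofReal ?_)
          have h1 : Real.exp (-(α/12)) ≤ Real.exp (-1) := by
            apply Real.exp_le_exp.mpr; linarith
          refine h1.trans ?_
          rw [Real.exp_neg]
          rw [inv_le_comm₀ (Real.exp_pos 1) (by norm_num)]
          have := Real.add_one_le_exp 1
          linarith
        have hfin : besselMeasure α β (Set.Iio (μ/2)) ≠ ⊤ :=
          ((isProb hα hβ _).trans_lt ENNReal.one_lt_top).ne
        have hcompl : besselMeasure α β (Set.Ici (μ/2)) =
            1 - besselMeasure α β (Set.Iio (μ/2)) := by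
          rw [← compl_Iio, measure_compl measurableSet_Iio hfin, mass hα hβ]
        rw [hcompl]
        calc ENNReal.ofReal c₁ ≤ ENNReal.ofReal (1/2) :=
              ENNReal.ofReal_le_ofReal (min_le_left _ _)
          _ = 1 - ENNReal.ofReal (1/2) := by
              rw [← ENNReal.ofReal_one, ← ENNReal.ofReal_sub _ (by norm_num)]
              norm_num
          _ ≤ 1 - besselMeasure α β (Set.Iio (μ/2)) := tsub_le_tsub_left hlap2 _
      · -- small α regime
        refine le_trans ?_ (tail_lower hα hβ ha)
        apply ENNReal.ofReal_le_ofReal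
        have hβup : β ≤ 12/μ₀ := by
          rw [le_div_iff₀ hμ₀]
          nlinarith
        have hαlow : β₀*μ₀ ≤ α := by
          rw [hαβμ]
          exact mul_le_mul hββ₀ hμμ₀ hμ₀.le hβ.le
        have hexp : -α - β*(μ/2+1) = -(3*α/2 + β) := by
          rw [hαβμ]; ring
        rw [hexp]
        calc c₁ ≤ c₂ := min_le_right _ _
          _ ≤ (β₀*μ₀)*β₀*Real.exp (-(3*α/2 + β)) := by
              apply mul_le_mul
              · nlinarith
              · apply Real.exp_le_exp.mpr
                have : 3*α/2 ≤ 18 := by linarith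
                linarith
              · positivity
              · positivity
          _ ≤ α * β * Real.exp (-(3*α/2 + β)) := by
              apply mul_le_mul_of_nonneg_right _ (Real.exp_pos _).le
              apply mul_le_mul hαlow hββ₀ hβ₀.le hα.le
    calc ENNReal.ofReal (c₁ * (1/2) ^ κ * μ ^ κ)
        = ENNReal.ofReal ((μ/2) ^ κ) * ENNReal.ofReal c₁ := by
          rw [← ENNReal.ofReal_mul (by positivity)]
          congr 1
          rw [show μ/2 = μ * (1/2) by ring, Real.mul_rpow hμ.le (by norm_num)]
          ring
      _ ≤ ENNReal.ofReal ((μ/2) ^ κ) * besselMeasure α β (Set.Ici (μ/2)) :=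
          mul_le_mul_right hIci _
      _ ≤ ∫⁻ y, ENNReal.ofReal (y ^ κ) ∂(besselMeasure α β) :=
          moment_lower hα hβ hκ ha
  · -- upper bound
    have hup := moment_upper hα hβ hκ hm hκm (w := μ) hμ
    refine hup.trans ?_
    have hV : (1/β)^(n+1) * (α * (α + 2*(n+1 : ℕ))^((n+1)-1)) ≤ Cn * μ^(n+1) := by
      have hXβ : (α + 2*((n:ℝ)+1))/β = μ + 2*((n:ℝ)+1)/β := by
        rw [hαβμ]; field_simp
      have hX : (α + 2*((n:ℝ)+1))/β ≤ μ * (1 + 2*((n:ℝ)+1)/(β₀*μ₀)) := by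
        rw [hXβ]
        have h1 : 2*((n:ℝ)+1)/β ≤ 2*((n:ℝ)+1)/β₀ :=
          div_le_div_of_nonneg_left (by positivity) hβ₀ hββ₀
        have h2 : 2*((n:ℝ)+1)/β₀ ≤ μ * (2*((n:ℝ)+1)/(β₀*μ₀)) := by
          rw [show μ * (2*((n:ℝ)+1)/(β₀*μ₀)) = (μ/μ₀) * (2*((n:ℝ)+1)/β₀) by
            field_simp]
          have : 1 ≤ μ/μ₀ := (one_le_div hμ₀).mpr hμμ₀
          nlinarith [show (0:ℝ) ≤ 2*((n:ℝ)+1)/β₀ by positivity]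
        calc μ + 2*((n:ℝ)+1)/β ≤ μ + μ * (2*((n:ℝ)+1)/(β₀*μ₀)) := by linarith
          _ = μ * (1 + 2*((n:ℝ)+1)/(β₀*μ₀)) := by ring
      have hVeq : (1/β)^(n+1) * (α * (α + 2*((n:ℝ)+1))^n) =
          μ * ((α + 2*((n:ℝ)+1))/β)^n := by
        rw [hαβμ, div_pow, div_pow]
        field_simp
        ring
      have cast1 : (((n+1 : ℕ)):ℝ) = (n:ℝ)+1 := by push_cast; ring
      rw [show (n+1)-1 = n by omega, cast1, hVeq]
      calc μ * ((α + 2*((n:ℝ)+1))/β)^n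
          ≤ μ * (μ * (1 + 2*((n:ℝ)+1)/(β₀*μ₀)))^n := by
            apply mul_le_mul_of_nonneg_left _ hμ.le
            exact pow_le_pow_left₀ (by positivity) hX n
        _ = Cn * μ^(n+1) := by
            rw [mul_pow, hCn, pow_succ]
            push_cast
            ring
    calc ENNReal.ofReal (μ ^ κ) + ENNReal.ofReal (μ ^ (κ - (n+1 : ℕ))) *
          ENNReal.ofReal ((1/β)^(n+1) * (α * (α + 2*(n+1 : ℕ))^((n+1)-1)))
        ≤ ENNReal.ofReal (μ ^ κ) + ENNReal.ofReal (μ ^ (κ - (n+1 : ℕ))) *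
          ENNReal.ofReal (Cn * μ^(n+1)) := by
          exact add_le_add_right (mul_le_mul_right (ENNReal.ofReal_le_ofReal hV) _) _
      _ = ENNReal.ofReal ((1 + Cn) * μ ^ κ) := by
          rw [← ENNReal.ofReal_mul (Real.rpow_nonneg hμ.le _)]
          rw [← ENNReal.ofReal_add (Real.rpow_nonneg hμ.le _) (by positivity)]
          congr 1
          have : μ ^ (κ - ((n+1:ℕ):ℝ)) * μ^(n+1) = μ ^ κ := by
            rw [← Real.rpow_natCast μ (n+1), ← Real.rpow_add hμ]
            congr 1
            ring
          calc μ ^ κ + μ ^ (κ - ((n+1:ℕ):ℝ)) * (Cn * μ^(n+1))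
              = μ ^ κ + Cn * (μ ^ (κ - ((n+1:ℕ):ℝ)) * μ^(n+1)) := by ring
            _ = (1 + Cn) * μ ^ κ := by rw [this]; ring
end BexAux


theorem bessel_double_integral_finite_iff (b σ κ t : ℝ) (hb : 0 < b) (hσ : 0 < σ)
    (hκ : 0 < κ) (ht : 0 < t)
    (ν : Measure ℝ) (hνsupp : ν (Set.Iic 0) = 0)
    (hν : ∫⁻ z in Set.Ioi (0 : ℝ), ENNReal.ofReal (min z 1) ∂ν < ⊤) :
    (∫⁻ s in Set.Ioc (0 : ℝ) t,
        ∫⁻ z in Set.Ioi (1 : ℝ),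
          (∫⁻ y, ENNReal.ofReal (y ^ κ)
            ∂ besselMeasure (2 * b * z / (σ ^ 2 * (Real.exp (b * s) - 1)))
                (2 * b * Real.exp (b * s) / (σ ^ 2 * (Real.exp (b * s) - 1)))) ∂ν
      < ⊤) ↔
      ∫⁻ z in Set.Ioi (1 : ℝ), ENNReal.ofReal (z ^ κ) ∂ν < ⊤ := by
  classical
  set μ₀ : ℝ := Real.exp (-(b*t)) with hμ₀def
  have hμ₀pos : 0 < μ₀ := Real.exp_pos _
  set β₀ : ℝ := 2*b/σ^2 with hβ₀def
  have hβ₀pos : 0 < β₀ := by positivity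
  have hm : 1 ≤ ⌈κ⌉₊ := Nat.one_le_ceil_iff.mpr hκ
  have hκm : κ ≤ (⌈κ⌉₊ : ℝ) := Nat.le_ceil κ
  obtain ⟨cl, cu, hcl, hcu, H⟩ := BexAux.two_sided hκ hβ₀pos hμ₀pos hm hκm
  set M : ℝ → ℝ → ℝ≥0∞ := fun s z =>
      ∫⁻ y, ENNReal.ofReal (y ^ κ)
        ∂ besselMeasure (2 * b * z / (σ ^ 2 * (Real.exp (b * s) - 1)))
            (2 * b * Real.exp (b * s) / (σ ^ 2 * (Real.exp (b * s) - 1))) with hM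
  have key : ∀ s ∈ Set.Ioc (0:ℝ) t, ∀ z ∈ Set.Ioi (1:ℝ),
      ENNReal.ofReal ((cl * μ₀ ^ κ) * z ^ κ) ≤ M s z ∧
      M s z ≤ ENNReal.ofReal (cu * z ^ κ) := by
    intro s hs z hz
    have hs0 : 0 < s := hs.1
    have hst : s ≤ t := hs.2
    have hz1 : 1 < z := hz
    have hz0 : 0 < z := lt_trans one_pos hz1
    have hE1 : 1 < Real.exp (b*s) := Real.one_lt_exp_iff.mpr (by positivity)
    have hEpos : 0 < Real.exp (b*s) := Real.exp_pos _
    have hden : 0 < σ^2 * (Real.exp (b*s) - 1) := mul_pos (by positivity) (by linarith)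
    set μ : ℝ := z * Real.exp (-(b*s)) with hμdef
    have hμpos : 0 < μ := by positivity
    have hEE : Real.exp (b*s) * Real.exp (-(b*s)) = 1 := by
      rw [← Real.exp_add]; simp
    have hαβμ : 2 * b * z / (σ ^ 2 * (Real.exp (b * s) - 1)) =
        (2 * b * Real.exp (b * s) / (σ ^ 2 * (Real.exp (b * s) - 1))) * μ := by
      have harr : (2 * b * Real.exp (b * s) / (σ ^ 2 * (Real.exp (b * s) - 1))) *
          (z * Real.exp (-(b*s))) =
          2 * b * z * (Real.exp (b*s) * Real.exp (-(b*s))) / (σ ^ 2 * (Real.exp (b * s) - 1)) := by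
        ring
      rw [hμdef, harr, hEE, mul_one]
    have hββ₀ : β₀ ≤ 2 * b * Real.exp (b * s) / (σ ^ 2 * (Real.exp (b * s) - 1)) := by
      rw [hβ₀def, div_le_div_iff₀ (by positivity) hden]
      nlinarith
    have hμμ₀ : z * μ₀ ≤ μ := by
      rw [hμdef, hμ₀def]
      apply mul_le_mul_of_nonneg_left _ hz0.le
      apply Real.exp_le_exp.mpr
      nlinarith
    have hμμ₀' : μ₀ ≤ μ := by
      calc μ₀ = 1 * μ₀ := by ring
        _ ≤ z * μ₀ := by nlinarith
        _ ≤ μ := hμμ₀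
    have hμz : μ ≤ z := by
      rw [hμdef]
      calc z * Real.exp (-(b*s)) ≤ z * 1 := by
            apply mul_le_mul_of_nonneg_left _ hz0.le
            exact Real.exp_le_one_iff.mpr (by nlinarith)
        _ = z := by ring
    have hβpos : 0 < 2 * b * Real.exp (b * s) / (σ ^ 2 * (Real.exp (b * s) - 1)) := by
      positivity
    obtain ⟨Hlow, Hup⟩ := H _ _ μ hβpos hμpos hαβμ hββ₀ hμμ₀'
    constructor
    · refine le_trans ?_ Hlow
      apply ENNReal.ofReal_le_ofReal
      calc (cl * μ₀ ^ κ) * z ^ κ = cl * (z * μ₀) ^ κ := by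
            rw [Real.mul_rpow hz0.le hμ₀pos.le]; ring
        _ ≤ cl * μ ^ κ := by
            apply mul_le_mul_of_nonneg_left _ hcl.le
            exact Real.rpow_le_rpow (by positivity) hμμ₀ hκ.le
    · refine Hup.trans ?_
      apply ENNReal.ofReal_le_ofReal
      apply mul_le_mul_of_nonneg_left _ hcu.le
      exact Real.rpow_le_rpow hμpos.le hμz hκ.le
  have hzmeas : Measurable (fun z : ℝ => ENNReal.ofReal (z ^ κ)) :=
    Measurable.ennreal_ofReal (Real.continuous_rpow_const hκ.le).measurable
  set K : ℝ≥0∞ := ∫⁻ z in Set.Ioi (1:ℝ), ENNReal.ofReal (z ^ κ) ∂ν with hK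
  have hupper : ∫⁻ s in Set.Ioc (0:ℝ) t, ∫⁻ z in Set.Ioi (1:ℝ), M s z ∂ν ≤
      (ENNReal.ofReal cu * K) * ENNReal.ofReal t := by
    have hinner : ∀ s ∈ Set.Ioc (0:ℝ) t,
        ∫⁻ z in Set.Ioi (1:ℝ), M s z ∂ν ≤ ENNReal.ofReal cu * K := by
      intro s hs
      have : ∫⁻ z in Set.Ioi (1:ℝ), M s z ∂ν ≤
          ∫⁻ z in Set.Ioi (1:ℝ), ENNReal.ofReal cu * ENNReal.ofReal (z ^ κ) ∂ν := by
        apply lintegral_mono_ae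
        rw [ae_restrict_iff' measurableSet_Ioi]
        refine Filter.Eventually.of_forall (fun z hz => ?_)
        refine ((key s hs z hz).2).trans ?_
        rw [ENNReal.ofReal_mul hcu.le]
      refine this.trans ?_
      rw [lintegral_const_mul _ hzmeas]
    calc ∫⁻ s in Set.Ioc (0:ℝ) t, ∫⁻ z in Set.Ioi (1:ℝ), M s z ∂ν
        ≤ ∫⁻ _ in Set.Ioc (0:ℝ) t, (ENNReal.ofReal cu * K) ∂volume := by
          apply lintegral_mono_ae
          rw [ae_restrict_iff' measurableSet_Ioc]
          exact Filter.Eventually.of_forall hinner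
      _ = (ENNReal.ofReal cu * K) * ENNReal.ofReal t := by
          rw [setLIntegral_const, Real.volume_Ioc, sub_zero]
  have hlower : (ENNReal.ofReal (cl * μ₀ ^ κ) * K) * ENNReal.ofReal t ≤
      ∫⁻ s in Set.Ioc (0:ℝ) t, ∫⁻ z in Set.Ioi (1:ℝ), M s z ∂ν := by
    have hinner : ∀ s ∈ Set.Ioc (0:ℝ) t,
        ENNReal.ofReal (cl * μ₀ ^ κ) * K ≤ ∫⁻ z in Set.Ioi (1:ℝ), M s z ∂ν := by
      intro s hs
      have : ∫⁻ z in Set.Ioi (1:ℝ),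
          ENNReal.ofReal (cl * μ₀ ^ κ) * ENNReal.ofReal (z ^ κ) ∂ν ≤
          ∫⁻ z in Set.Ioi (1:ℝ), M s z ∂ν := by
        apply lintegral_mono_ae
        rw [ae_restrict_iff' measurableSet_Ioi]
        refine Filter.Eventually.of_forall (fun z hz => ?_)
        refine le_trans ?_ ((key s hs z hz).1)
        rw [← ENNReal.ofReal_mul (by positivity)]
      refine le_trans ?_ this
      rw [lintegral_const_mul _ hzmeas]
    calc (ENNReal.ofReal (cl * μ₀ ^ κ) * K) * ENNReal.ofReal t
        = ∫⁻ _ in Set.Ioc (0:ℝ) t, (ENNReal.ofReal (cl * μ₀ ^ κ) * K) ∂volume := by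
          rw [setLIntegral_const, Real.volume_Ioc, sub_zero]
      _ ≤ ∫⁻ s in Set.Ioc (0:ℝ) t, ∫⁻ z in Set.Ioi (1:ℝ), M s z ∂ν := by
          apply lintegral_mono_ae
          rw [ae_restrict_iff' measurableSet_Ioc]
          exact Filter.Eventually.of_forall hinner
  constructor
  · intro hfin
    by_contra hKtop
    rw [not_lt, top_le_iff] at hKtop
    have : (ENNReal.ofReal (cl * μ₀ ^ κ) * K) * ENNReal.ofReal t = ⊤ := by
      rw [hKtop, ENNReal.mul_top, ENNReal.top_mul]
      · exact fun h => absurd h (by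
          simp only [ENNReal.ofReal_eq_zero, not_le]
          positivity)
      · simp only [ne_eq, ENNReal.ofReal_eq_zero, not_le]
        positivity
    rw [this] at hlower
    exact absurd (top_le_iff.mp hlower ▸ hfin) (lt_irrefl ⊤)
  · intro hKfin
    refine lt_of_le_of_lt hupper ?_
    exact ENNReal.mul_lt_top (ENNReal.mul_lt_top ENNReal.ofReal_lt_top hKfin)
      ENNReal.ofReal_lt_top
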